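/- Let (R,m) be Noetherian local of characteristic p > 0 and z_1,...,z_n F-independent elements of a finitely generated R-module M. Then every minimal generating set of the submodule L = (z_1,...,z_n) is F-independent; i.e., L is strongly F-independent. -/

import Mathlib

open TensorProduct

/-- `R` viewed as an `R`-algebra via the `e`-th iterate of the Frobenius endomorphism. -/
def FrobTwist (R : Type*) [CommRing R] (p : ℕ) [Fact p.Prime] [CharP R p] (_e : ℕ) :
    Type _ := R

instance (R : Type*) [CommRing R] (p : ℕ) [Fact p.Prime] [CharP R p] (e : ℕ) :
    CommRing (FrobTwist R p e) := ‹CommRing R›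

noncomputable instance (R : Type*) [CommRing R] (p : ℕ) [Fact p.Prime] [CharP R p] (e : ℕ) :
    Algebra R (FrobTwist R p e) := (iterateFrobenius R p e).toAlgebra

/-- The `e`-th Frobenius functor applied to the `R`-module `M`:
`F^e(M) = FrobTwist R p e ⊗[R] M`, a module over `FrobTwist R p e` (which is `R` as a ring). -/
def FrobModule (R : Type*) [CommRing R] (p : ℕ) [Fact p.Prime] [CharP R p]
    (M : Type*) [AddCommGroup M] [Module R M] (e : ℕ) : Type _ :=
  FrobTwist R p e ⊗[R] M

section
variable (R : Type*) [CommRing R] (p : ℕ) [Fact p.Prime] [CharP R p]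
  (M : Type*) [AddCommGroup M] [Module R M] (e : ℕ)

noncomputable instance : AddCommGroup (FrobModule R p M e) :=
  inferInstanceAs (AddCommGroup (FrobTwist R p e ⊗[R] M))

noncomputable instance : Module (FrobTwist R p e) (FrobModule R p M e) :=
  inferInstanceAs (Module (FrobTwist R p e) (FrobTwist R p e ⊗[R] M))

/-- The image `z^q := F^e(z)` of `z ∈ M` in `F^e(M)`. -/
noncomputable def frobMap (z : M) : FrobModule R p M e := (1 : FrobTwist R p e) ⊗ₜ[R] z

/-- The Frobenius power `N^{[q]}_M ⊆ F^e(M)` of a submodule `N ⊆ M`, `q = p^e`. -/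
noncomputable def frobPow (N : Submodule R M) : Submodule (FrobTwist R p e) (FrobModule R p M e) :=
  Submodule.span (FrobTwist R p e) (frobMap R p M e '' N)

/-- An ideal of `R`, regarded as an ideal of `FrobTwist R p e` (the same ring). -/
def idealTwist (I : Ideal R) : Ideal (FrobTwist R p e) := I

/-- The Frobenius closure `N^F_M` of a submodule `N ⊆ M`, as a set. -/
noncomputable def frobClSet (N : Submodule R M) : Set M :=
  {z | ∃ e : ℕ, frobMap R p M e z ∈ frobPow R p M e N}

/-- The special part of the Frobenius closure `N^{Fsp}_M`, as a set:
elements `z` with `z^q ∈ m·N^{[q]}_M` for some `q = p^e`. -/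
noncomputable def frobSpSet [IsLocalRing R] (N : Submodule R M) : Set M :=
  {z | ∃ e : ℕ, frobMap R p M e z ∈
    idealTwist R p e (IsLocalRing.maximalIdeal R) • frobPow R p M e N}

end

section
variable (R : Type*) [CommRing R] (p : ℕ) [Fact p.Prime] [CharP R p]
  (M : Type*) [AddCommGroup M] [Module R M] (e : ℕ)

-- AUX LEMMAS
lemma frobMap_zero : frobMap R p M e 0 = 0 := TensorProduct.tmul_zero M (1 : FrobTwist R p e)

lemma frobMap_add (x y : M) :
    frobMap R p M e (x + y) = frobMap R p M e x + frobMap R p M e y :=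
  TensorProduct.tmul_add (1 : FrobTwist R p e) x y

/-- `R → FrobTwist R p e`, the identity map on underlying sets. -/
def toTwist (r : R) : FrobTwist R p e := r

lemma frobMap_smul (r : R) (x : M) :
    frobMap R p M e (r • x) = toTwist R p e (r ^ p ^ e) • frobMap R p M e x := by
  show (1 : FrobTwist R p e) ⊗ₜ[R] (r • x) =
    toTwist R p e (r ^ p ^ e) • ((1 : FrobTwist R p e) ⊗ₜ[R] x)
  rw [TensorProduct.smul_tmul', smul_eq_mul, mul_one, ← TensorProduct.smul_tmul]
  congr 1
  show r • (1 : FrobTwist R p e) = (r ^ p ^ e : FrobTwist R p e)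
  rw [Algebra.smul_def, mul_one]
  show iterateFrobenius R p e r = r ^ p ^ e
  exact iterateFrobenius_def p e r

@[simp] lemma toTwist_add (x y : R) :
    toTwist R p e (x + y) = toTwist R p e x + toTwist R p e y := rfl

@[simp] lemma toTwist_mul (x y : R) :
    toTwist R p e (x * y) = toTwist R p e x * toTwist R p e y := rfl

@[simp] lemma toTwist_neg (x : R) : toTwist R p e (-x) = -(toTwist R p e x) := rfl

@[simp] lemma toTwist_one : toTwist R p e 1 = 1 := rfl

@[simp] lemma toTwist_zero : toTwist R p e 0 = 0 := rfl

lemma toTwist_sum {ι : Type*} (s : Finset ι) (f : ι → R) :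
    toTwist R p e (∑ t ∈ s, f t) = ∑ t ∈ s, toTwist R p e (f t) := rfl

lemma frobMap_sum {ι : Type*} (s : Finset ι) (f : ι → M) :
    frobMap R p M e (∑ t ∈ s, f t) = ∑ t ∈ s, frobMap R p M e (f t) := by
  classical
  induction s using Finset.induction_on with
  | empty => simpa using frobMap_zero R p M e
  | insert _ _ h ih => rw [Finset.sum_insert h, Finset.sum_insert h, frobMap_add, ih]

lemma frobPow_span (S : Set M) :
    frobPow R p M e (Submodule.span R S)
      = Submodule.span (FrobTwist R p e) (frobMap R p M e '' S) := by
  apply le_antisymm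
  · rw [frobPow, Submodule.span_le]
    rintro _ ⟨u, hu, rfl⟩
    induction hu using Submodule.span_induction with
    | mem x hx => exact Submodule.subset_span ⟨x, hx, rfl⟩
    | zero => rw [frobMap_zero]; exact Submodule.zero_mem _
    | add x y _ _ hx hy => rw [frobMap_add]; exact Submodule.add_mem _ hx hy
    | smul r x _ hx => rw [frobMap_smul]; exact Submodule.smul_mem _ _ hx
  · exact Submodule.span_mono (Set.image_mono Submodule.subset_span)

lemma image_exclude {V W : Type*} {k : ℕ} (f : V → W) (v : Fin k → V) (i : Fin k) :
    f '' {x | ∃ j, j ≠ i ∧ x = v j} = {x | ∃ j, j ≠ i ∧ x = f (v j)} := by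
  ext x
  constructor
  · rintro ⟨u, ⟨j, hj, rfl⟩, rfl⟩; exact ⟨j, hj, rfl⟩
  · rintro ⟨j, hj, rfl⟩; exact ⟨v j, ⟨j, hj, rfl⟩, rfl⟩

lemma span_exclude_eq {A V : Type*} [Ring A] [AddCommGroup V] [Module A V] {k : ℕ}
    (v : Fin k → V) (i : Fin k) :
    Submodule.span A {x | ∃ j, j ≠ i ∧ x = v j}
      = Submodule.span A (Set.range (fun j => if j = i then 0 else v j)) := by
  apply le_antisymm <;> rw [Submodule.span_le]
  · rintro _ ⟨j, hj, rfl⟩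
    have : v j = (fun j => if j = i then 0 else v j) j := by simp [hj]
    rw [this]; exact Submodule.subset_span ⟨j, rfl⟩
  · rintro _ ⟨j, rfl⟩
    by_cases hj : j = i
    · simp only [if_pos hj]
      exact Submodule.zero_mem _
    · simp only [if_neg hj]
      exact Submodule.subset_span ⟨j, hj, rfl⟩

end

lemma exists_left_inverse_matrix {K : Type*} [Field K] {m n : ℕ}
    (A : Matrix (Fin m) (Fin n) K)
    (h : ∀ g : Fin m → K, Matrix.vecMul g A = 0 → g = 0) :
    ∃ B : Matrix (Fin n) (Fin m) K, A * B = 1 := by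
  have hker : LinearMap.ker A.vecMulLinear = ⊥ := by
    rw [LinearMap.ker_eq_bot']
    intro g hg
    exact h g (by rwa [Matrix.vecMulLinear_apply] at hg)
  obtain ⟨g, hg⟩ := LinearMap.exists_leftInverse_of_injective _ hker
  refine ⟨Matrix.of fun l j => g ((Pi.single l 1 : Fin n → K)) j, ?_⟩
  ext j j'
  have h1 : g (Matrix.vecMul ((Pi.single j 1 : Fin m → K)) A) = (Pi.single j 1 : Fin m → K) := by
    have := congrArg (fun f => f ((Pi.single j 1 : Fin m → K))) (congrArg DFunLike.coe hg)
    simpa using this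
  have h2 : Matrix.vecMul ((Pi.single j 1 : Fin m → K)) A = A j := by
    funext l
    simp [Matrix.vecMul, dotProduct, Pi.single_apply]
  have h3 : (∑ l, A j l • (Pi.single l 1 : Fin n → K)) = A j := by
    funext l'
    simp [Pi.single_apply, Finset.sum_ite_eq']
  calc (A * Matrix.of fun l j => g ((Pi.single l 1 : Fin n → K)) j) j j'
      = ∑ l, A j l * g ((Pi.single l 1 : Fin n → K)) j' := by simp [Matrix.mul_apply]
    _ = (g (∑ l, A j l • (Pi.single l 1 : Fin n → K))) j' := by
        rw [map_sum]; simp [Finset.sum_apply]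
    _ = (Pi.single j 1 : Fin m → K) j' := by rw [h3, ← h2, h1]
    _ = (1 : Matrix (Fin m) (Fin m) K) j j' := by
        rw [Matrix.one_apply, Pi.single_apply]
        simp [eq_comm]

/-- If `z 1, …, z n` are `F`-independent elements of a finitely
generated module `M` over a Noetherian local ring of characteristic `p > 0`, then the
submodule `L` they generate is strongly `F`-independent: every minimal generating set
`y 1, …, y m` of `L` is `F`-independent. -/
theorem F_independent_gives_strongly_F_independent
    (R : Type*) [CommRing R] [IsNoetherianRing R] [IsLocalRing R]
    (p : ℕ) [Fact p.Prime] [CharP R p]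
    (M : Type*) [AddCommGroup M] [Module R M] [Module.Finite R M]
    (n : ℕ) (z : Fin n → M)
    (hz : ∀ i : Fin n,
      z i ∉ frobClSet R p M (Submodule.span R {x | ∃ j, j ≠ i ∧ x = z j}))
    (m : ℕ) (y : Fin m → M)
    (hygen : Submodule.span R (Set.range y) = Submodule.span R (Set.range z))
    (hymin : ∀ i : Fin m, y i ∉ Submodule.span R {x | ∃ j, j ≠ i ∧ x = y j}) :
    ∀ i : Fin m,
      y i ∉ frobClSet R p M (Submodule.span R {x | ∃ j, j ≠ i ∧ x = y j}) := by
  classical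
  intro i hyi
  obtain ⟨e, he⟩ := hyi
  set q := p ^ e with hq
  rw [frobPow_span, image_exclude, span_exclude_eq] at he
  obtain ⟨c', hc'⟩ := (Submodule.mem_span_range_iff_exists_fun _).mp he
  -- transfer coefficients to `R`
  set c : Fin m → R := fun j => c' j with hcdef
  have hc : ∑ j, toTwist R p e (c j) • (if j = i then 0 else frobMap R p M e (y j))
      = frobMap R p M e (y i) := hc'
  -- coefficients of the `y j` in terms of the `z k`
  have hay : ∀ j, ∃ aj : Fin n → R, ∑ k, aj k • z k = y j := by
    intro j
    have : y j ∈ Submodule.span R (Set.range z) := hygen ▸ Submodule.subset_span ⟨j, rfl⟩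
    exact (Submodule.mem_span_range_iff_exists_fun R).mp this
  choose a ha using hay
  have hfr : ∀ j, frobMap R p M e (y j)
      = ∑ k, toTwist R p e (a j k ^ q) • frobMap R p M e (z k) := by
    intro j
    rw [← ha j, frobMap_sum]
    exact Finset.sum_congr rfl fun k _ => frobMap_smul R p M e (a j k) (z k)
  set D : Fin m → R := fun j => if j = i then 1 else -(c j) with hDdef
  have hDi : D i = 1 := if_pos rfl
  have hD : ∑ j, toTwist R p e (D j) • frobMap R p M e (y j) = 0 := by
    have step : ∀ j, toTwist R p e (D j) • frobMap R p M e (y j)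
        = (if j = i then frobMap R p M e (y i) else 0)
          - toTwist R p e (c j) • (if j = i then 0 else frobMap R p M e (y j)) := by
      intro j
      by_cases hj : j = i
      · rw [hDdef]; simp [hj]
      · rw [hDdef]; simp [hj]
    rw [Finset.sum_congr rfl fun j _ => step j, Finset.sum_sub_distrib, hc,
      Finset.sum_ite_eq' Finset.univ i fun _ => frobMap R p M e (y i)]
    simp
  set w : Fin n → R := fun k => ∑ j, D j * a j k ^ q with hwdef
  have hw : ∑ k, toTwist R p e (w k) • frobMap R p M e (z k) = 0 := by
    calc ∑ k, toTwist R p e (w k) • frobMap R p M e (z k)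
        = ∑ k, ∑ j, toTwist R p e (D j) •
            (toTwist R p e (a j k ^ q) • frobMap R p M e (z k)) := by
          refine Finset.sum_congr rfl fun k _ => ?_
          rw [hwdef, toTwist_sum, Finset.sum_smul]
          exact Finset.sum_congr rfl fun j _ => by rw [toTwist_mul, mul_smul]
      _ = ∑ j, toTwist R p e (D j) • frobMap R p M e (y j) := by
          rw [Finset.sum_comm]
          refine Finset.sum_congr rfl fun j _ => ?_
          rw [hfr j, Finset.smul_sum]
      _ = 0 := hD
  by_cases hcase : ∃ k, IsUnit (w k)
  · -- a unit coefficient contradicts F-independence of z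
    obtain ⟨k, hk⟩ := hcase
    apply hz k
    refine ⟨e, ?_⟩
    rw [frobPow_span, image_exclude, span_exclude_eq, Submodule.mem_span_range_iff_exists_fun]
    refine ⟨fun l => if l = k then 0
      else -(toTwist R p e (↑hk.unit⁻¹) * toTwist R p e (w l)), ?_⟩
    have e1 : ∀ l, (if l = k then 0
          else -(toTwist R p e (↑hk.unit⁻¹) * toTwist R p e (w l))) •
          (if l = k then 0 else frobMap R p M e (z l))
        = -(toTwist R p e (↑hk.unit⁻¹) •
            ((if l = k then (0 : FrobModule R p M e)
              else toTwist R p e (w l) • frobMap R p M e (z l)))) := by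
      intro l
      by_cases hl : l = k <;> simp [hl, mul_smul]
    rw [Finset.sum_congr rfl fun l _ => e1 l, Finset.sum_neg_distrib, ← Finset.smul_sum]
    have e2 : ∑ l, (if l = k then (0 : FrobModule R p M e)
        else toTwist R p e (w l) • frobMap R p M e (z l))
        = -(toTwist R p e (w k) • frobMap R p M e (z k)) := by
      have h2 : ∀ l, (if l = k then (0 : FrobModule R p M e)
          else toTwist R p e (w l) • frobMap R p M e (z l))
          = toTwist R p e (w l) • frobMap R p M e (z l)
            - (if l = k then toTwist R p e (w l) • frobMap R p M e (z l) else 0) := by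
        intro l
        by_cases hl : l = k <;> simp [hl]
      rw [Finset.sum_congr rfl fun l _ => h2 l, Finset.sum_sub_distrib, hw,
        Finset.sum_ite_eq' Finset.univ k fun l => toTwist R p e (w l) • frobMap R p M e (z l)]
      simp
    rw [e2, smul_neg, neg_neg, smul_smul, ← toTwist_mul, IsUnit.val_inv_mul, toTwist_one, one_smul]
  · push_neg at hcase
    have hm : ∀ kk, w kk ∈ IsLocalRing.maximalIdeal R :=
      fun kk => (IsLocalRing.mem_maximalIdeal _).mpr (mem_nonunits_iff.mpr (hcase kk))
    set K := IsLocalRing.ResidueField R with hK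
    set π := IsLocalRing.residue R with hπR
    haveI : CharP K p := by
      refine (CharP.charP_iff_prime_eq_zero Fact.out).mpr ?_
      rw [← map_natCast π p, CharP.cast_eq_zero R p, map_zero]
    have hπ0 : ∀ kk, π (w kk) = 0 := fun kk => Ideal.Quotient.eq_zero_iff_mem.mpr (hm kk)
    have hz_mem : ∀ l, z l ∈ Submodule.span R (Set.range y) := fun l => by
      rw [hygen]; exact Submodule.subset_span ⟨l, rfl⟩
    have hind : ∀ g : Fin m → K, (∀ l, ∑ j, g j * π (a j l) = 0) → g = 0 := by
      intro g hg
      by_contra hgne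
      obtain ⟨j₀, hj₀'⟩ := Function.ne_iff.mp hgne
      have hj₀ : g j₀ ≠ 0 := by simpa using hj₀'
      choose G hG using fun j => IsLocalRing.residue_surjective (g j)
      have hGu : IsUnit (G j₀) := by
        by_contra hGu
        refine hj₀ ?_
        rw [← hG j₀]
        exact Ideal.Quotient.eq_zero_iff_mem.mpr
          ((IsLocalRing.mem_maximalIdeal _).mpr (mem_nonunits_iff.mpr hGu))
      have ht : ∀ l, (∑ j, G j * a j l) ∈ IsLocalRing.maximalIdeal R := by
        intro l
        have : π (∑ j, G j * a j l) = 0 := by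
          rw [map_sum]
          simp only [map_mul, hG]
          simpa only [hπR, hG] using hg l
        exact Ideal.Quotient.eq_zero_iff_mem.mp this
      have hsum : (∑ j, G j • y j) ∈
          (IsLocalRing.maximalIdeal R) • (Submodule.span R (Set.range y)) := by
        have hexp : ∑ j, G j • y j = ∑ l, (∑ j, G j * a j l) • z l := by
          calc ∑ j, G j • y j = ∑ j, ∑ l, (G j * a j l) • z l := by
                refine Finset.sum_congr rfl fun j _ => ?_
                rw [← ha j, Finset.smul_sum]
                exact Finset.sum_congr rfl fun l _ => (mul_smul _ _ _).symm
            _ = ∑ l, (∑ j, G j * a j l) • z l := by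
                rw [Finset.sum_comm]
                exact Finset.sum_congr rfl fun l _ => (Finset.sum_smul).symm
        rw [hexp]
        exact Submodule.sum_mem _ fun l _ => Submodule.smul_mem_smul (ht l) (hz_mem l)
      set N := Submodule.span R {x | ∃ j, j ≠ j₀ ∧ x = y j} with hN
      have hLsplit : Submodule.span R (Set.range y) = N ⊔ Submodule.span R {y j₀} := by
        apply le_antisymm
        · rw [Submodule.span_le]
          rintro _ ⟨j, rfl⟩
          by_cases hj : j = j₀
          · subst hj
            exact Submodule.mem_sup_right (Submodule.subset_span rfl)
          · exact Submodule.mem_sup_left (Submodule.subset_span ⟨j, hj, rfl⟩)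
        · refine sup_le (Submodule.span_le.mpr ?_) (Submodule.span_le.mpr ?_)
          · rintro _ ⟨j, _, rfl⟩
            exact Submodule.subset_span ⟨j, rfl⟩
          · intro x hx
            rw [Set.mem_singleton_iff] at hx
            subst hx
            exact Submodule.subset_span ⟨j₀, rfl⟩
      have hmL : (IsLocalRing.maximalIdeal R) • (Submodule.span R (Set.range y))
          ≤ N ⊔ (IsLocalRing.maximalIdeal R) • Submodule.span R {y j₀} := by
        rw [hLsplit, Submodule.smul_sup]
        exact sup_le_sup Submodule.smul_le_right le_rfl
      have h1 : G j₀ • y j₀ ∈ N ⊔ (IsLocalRing.maximalIdeal R) • Submodule.span R {y j₀} := by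
        have hsplit : G j₀ • y j₀
            = (∑ j, G j • y j) - ∑ j ∈ Finset.univ.erase j₀, G j • y j :=
          eq_sub_iff_add_eq.mpr
            (Finset.add_sum_erase Finset.univ (fun j => G j • y j) (Finset.mem_univ j₀))
        rw [hsplit]
        refine sub_mem (hmL hsum) ?_
        refine Submodule.mem_sup_left (Submodule.sum_mem _ fun j hj => ?_)
        exact Submodule.smul_mem _ _ (Submodule.subset_span ⟨j, (Finset.mem_erase.mp hj).1, rfl⟩)
      have h2 : y j₀ ∈ N ⊔ (IsLocalRing.maximalIdeal R) • Submodule.span R {y j₀} := by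
        have h2' := Submodule.smul_mem _ (↑hGu.unit⁻¹ : R) h1
        rwa [smul_smul, IsUnit.val_inv_mul, one_smul] at h2'
      obtain ⟨nn, hnn, mm, hmm, hnm⟩ := Submodule.mem_sup.mp h2
      obtain ⟨t, htm, rfl⟩ := Submodule.mem_smul_span_singleton.mp hmm
      have hyN : y j₀ ∈ N := by
        have hut : IsUnit (1 - t) :=
          IsLocalRing.isUnit_one_sub_self_of_mem_nonunits t ((IsLocalRing.mem_maximalIdeal _).mp htm)
        have h3 : (1 - t) • y j₀ = nn := by
          rw [sub_smul, one_smul]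
          exact (eq_sub_of_add_eq hnm).symm
        rw [← h3] at hnn
        have h7 := Submodule.smul_mem N (↑hut.unit⁻¹ : R) hnn
        rwa [smul_smul, IsUnit.val_inv_mul, one_smul] at h7
      exact hymin j₀ hyN
    obtain ⟨B, hB⟩ := exists_left_inverse_matrix (Matrix.of fun j l => π (a j l))
      (fun g hg => hind g (fun l => by
        simpa [Matrix.vecMul, dotProduct] using congrFun hg l))
    set φ : K →+* K := iterateFrobenius K p e with hφ
    have hABφ : (Matrix.of fun j l => π (a j l)).map φ * B.map φ = 1 := by
      rw [← Matrix.map_mul, hB, Matrix.map_one _ (map_zero φ) (map_one φ)]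
    have hrel : Matrix.vecMul (fun j => π (D j))
        ((Matrix.of fun j l => π (a j l)).map φ) = 0 := by
      funext l
      have h0 : π (w l) = 0 := hπ0 l
      simp only [hwdef] at h0
      rw [map_sum] at h0
      simp only [map_mul, map_pow] at h0
      show ∑ j, π (D j) * φ (π (a j l)) = 0
      simpa [hφ, iterateFrobenius_def, hq] using h0
    have hD0 : (fun j => π (D j)) = 0 := by
      calc (fun j => π (D j))
          = Matrix.vecMul (fun j => π (D j))
              ((Matrix.of fun j l => π (a j l)).map φ * B.map φ) := by
            rw [hABφ, Matrix.vecMul_one]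
        _ = Matrix.vecMul (Matrix.vecMul (fun j => π (D j))
              ((Matrix.of fun j l => π (a j l)).map φ)) (B.map φ) := by
            rw [Matrix.vecMul_vecMul]
        _ = 0 := by rw [hrel, Matrix.zero_vecMul]
    have h10 : (1 : K) = 0 := by
      have hfi := congrFun hD0 i
      rwa [hDi, map_one] at hfi
    exact one_ne_zero h10
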